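/- Explicit diffusion coefficient under the gradient condition (Remark after Theorem 3.17): Assume C_+ > 0, C_- > 0, C_E ≥ 0, C_A > 0, C_C > 0, d ≥ 1, and the gradient condition C_+ + C_- - C_A - 2C_E = 0. Then for every ρ ∈ (-1,1), d(ρ) = -(Φ'(ρ)/2)·(C_+ - C_-) + (1/2)·(C_+ + C_-). -/

import Mathlib

open Finset Filter

/-- Sites of the infinite lattice `ℤ^d`. -/
abbrev Site (d : ℕ) := Fin d → ℤ

/-- Configurations `χ^d = {-1,0,1}^{ℤ^d}`: the `Fin 3` values `0, 1, 2`
code the spins `-1, 0, 1` respectively. -/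
abbrev Config (d : ℕ) := Site d → Fin 3

/-- Spin value of a configuration at a site. -/
def spin {d : ℕ} (η : Config d) (x : Site d) : ℤ := (η x : ℤ) - 1

/-- The unit vector `e_i` of `ℤ^d`. -/
def ee (d : ℕ) (i : Fin d) : Site d := Pi.single i 1

/-- The translated configuration `τ_x η`, `(τ_x η)(z) = η(z - x)`. -/
def shiftCfg {d : ℕ} (x : Site d) (η : Config d) : Config d := fun z => η (z - x)

/-- `η` is `(x,y)`-active: `(η(x), η(y)) ∈ {(1,0), (0,-1), (-1,1), (1,-1), (0,0)}`. -/
def IsActive {d : ℕ} (x y : Site d) (η : Config d) : Prop :=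
  (η x = 2 ∧ η y = 1) ∨ (η x = 1 ∧ η y = 0) ∨ (η x = 0 ∧ η y = 2) ∨
    (η x = 2 ∧ η y = 0) ∨ (η x = 1 ∧ η y = 1)

instance {d : ℕ} (x y : Site d) (η : Config d) : Decidable (IsActive x y η) := by
  unfold IsActive; infer_instance

/-- The configuration `η^{(x,y)}`: swap the values at `x` and `y` in the three exchange cases,
annihilate a `(+,-)` pair, or create a `(-,+)` pair from two empty sites. -/
def cfgFlip {d : ℕ} (x y : Site d) (η : Config d) : Config d := fun z =>
  if z = x then (if η x = 2 ∧ η y = 0 then 1 else if η x = 1 ∧ η y = 1 then 0 else η y)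
  else if z = y then (if η x = 2 ∧ η y = 0 then 1 else if η x = 1 ∧ η y = 1 then 2 else η x)
  else η z

/-- The jump rate `c_{(x,y)}(η)` with constants `C_+, C_-, C_E, C_A, C_C`. -/
def rate {d : ℕ} (Cp Cm CE CA CC : ℝ) (x y : Site d) (η : Config d) : ℝ :=
  if η x = 2 ∧ η y = 1 then Cp
  else if η x = 1 ∧ η y = 0 then Cm
  else if η x = 0 ∧ η y = 2 then CE
  else if η x = 2 ∧ η y = 0 then CA
  else if η x = 1 ∧ η y = 1 then CC
  else 0

/-- `Φ(ρ)`, the probability of an empty site, with `β = C_C / C_A`. -/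
noncomputable def Phi (β ρ : ℝ) : ℝ :=
  if β = 1 / 4 then (1 - ρ ^ 2) / 2
  else (1 - Real.sqrt (4 * β + ρ ^ 2 - 4 * β * ρ ^ 2)) / (1 - 4 * β)

/-- The single-site marginal weight of `ν_ρ`: spin `-1` gets `(1-Φ(ρ)-ρ)/2`,
spin `0` gets `Φ(ρ)`, spin `1` gets `(1-Φ(ρ)+ρ)/2`. -/
noncomputable def wgt (β ρ : ℝ) : Fin 3 → ℝ := fun v =>
  if v = 0 then (1 - Phi β ρ - ρ) / 2 else if v = 1 then Phi β ρ else (1 - Phi β ρ + ρ) / 2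

/-- The box `Λ_n = {-n,...,n}^d` as a finite set of sites. -/
noncomputable def box (d : ℕ) (n : ℕ) : Finset (Site d) :=
  Fintype.piFinset fun _ : Fin d => Finset.Icc (-(n : ℤ)) (n : ℤ)

/-- Extension of a configuration on a finite set of sites by empty sites. -/
def extOn {d : ℕ} (S : Finset (Site d)) (ζ : {x : Site d // x ∈ S} → Fin 3) : Config d :=
  fun v => if h : v ∈ S then ζ ⟨v, h⟩ else 1

/-- Expectation with respect to the marginal of `ν_ρ` on a finite set `S` of sites
(exact for functions depending only on the coordinates in `S`). -/
noncomputable def Eexp {d : ℕ} (β ρ : ℝ) (S : Finset (Site d)) (f : Config d → ℝ) : ℝ :=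
  ∑ ζ : ({x : Site d // x ∈ S} → Fin 3), (∏ x, wgt β ρ (ζ x)) * f (extOn S ζ)

/-- The `ν_ρ`-integral `∫ f dν_ρ`, obtained as the limit of the finite-box marginal
expectations; for a cylinder function the sequence is eventually constant. -/
noncomputable def nuInt {d : ℕ} (β ρ : ℝ) (f : Config d → ℝ) : ℝ :=
  limUnder atTop fun n : ℕ => Eexp β ρ (box d n) f

/-- `f` is a cylinder function: it depends on finitely many coordinates. -/
def IsCylinder {d : ℕ} (f : Config d → ℝ) : Prop :=
  ∃ S : Finset (Site d), ∀ η η' : Config d, (∀ x ∈ S, η x = η' x) → f η = f η'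

/-- `π_{0,e_i} Γ_g (η)`: the (finitely supported) sum
`Σ_{x ∈ ℤ^d} (τ_x g(η^{(0,e_i)}) - τ_x g(η))` for a cylinder function `g`. -/
noncomputable def gradGammaSum {d : ℕ} (i : Fin d) (g : Config d → ℝ) (η : Config d) : ℝ :=
  ∑' x : Site d, (g (shiftCfg x (cfgFlip (0 : Site d) (ee d i) η)) - g (shiftCfg x η))

/-- The Dirichlet form `D_{0,e_i}(ν_ρ; a·η(0) + Γ_g)
= ∫ c_{(0,e_i)}(η) (a·π_{0,e_i}η(0)(η) + π_{0,e_i}Γ_g(η))² dν_ρ`. -/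
noncomputable def dirichletForm {d : ℕ} (Cp Cm CE CA CC ρ : ℝ) (i : Fin d) (a : ℝ)
    (g : Config d → ℝ) : ℝ :=
  nuInt (CC / CA) ρ fun η =>
    rate Cp Cm CE CA CC (0 : Site d) (ee d i) η *
      (a * ((spin (cfgFlip (0 : Site d) (ee d i) η) (0 : Site d) : ℝ) - (spin η (0 : Site d) : ℝ))
        + gradGammaSum i g η) ^ 2

/-- The static compressibility `χ(ρ) = 1 - Φ(ρ) - ρ²`. -/
noncomputable def compress (β ρ : ℝ) : ℝ := 1 - Phi β ρ - ρ ^ 2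

/-- The diffusion coefficient
`d(ρ) = χ(ρ)⁻¹ · inf_g D_{0,e_1}(ν_ρ; η(0) + Γ_g)`,
the infimum over all cylinder functions `g`. -/
noncomputable def dCoef (d : ℕ) (hd : 0 < d) (Cp Cm CE CA CC : ℝ) (ρ : ℝ) : ℝ :=
  (compress (CC / CA) ρ)⁻¹ *
    sInf {v : ℝ | ∃ g : Config d → ℝ, IsCylinder g ∧
      v = dirichletForm Cp Cm CE CA CC ρ (⟨0, hd⟩ : Fin d) 1 g}

namespace DGrad

/-- The square root appearing in `Phi`. -/
noncomputable def sq (β ρ : ℝ) : ℝ := Real.sqrt (4 * β + ρ ^ 2 - 4 * β * ρ ^ 2)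

lemma inner_pos {β ρ : ℝ} (hβ : 0 < β) (h1 : -1 < ρ) (h2 : ρ < 1) :
    0 < 4 * β + ρ ^ 2 - 4 * β * ρ ^ 2 := by
  have h3 : (0:ℝ) < 1 - ρ ^ 2 := by nlinarith
  nlinarith [mul_pos hβ h3, sq_nonneg ρ]

lemma sq_pos {β ρ : ℝ} (hβ : 0 < β) (h1 : -1 < ρ) (h2 : ρ < 1) : 0 < sq β ρ :=
  Real.sqrt_pos.2 (inner_pos hβ h1 h2)

lemma sq_sq {β ρ : ℝ} (hβ : 0 < β) (h1 : -1 < ρ) (h2 : ρ < 1) :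
    sq β ρ ^ 2 = 4 * β + ρ ^ 2 - 4 * β * ρ ^ 2 :=
  Real.sq_sqrt (inner_pos hβ h1 h2).le

lemma sq_eq {β ρ : ℝ} (hβ : 0 < β) (h1 : -1 < ρ) (h2 : ρ < 1) :
    sq β ρ = 1 - (1 - 4 * β) * Phi β ρ := by
  unfold Phi
  by_cases hb : β = 1 / 4
  · subst hb
    have : (4 * (1/4 : ℝ) + ρ ^ 2 - 4 * (1/4) * ρ ^ 2) = 1 := by ring
    simp [sq, this]
  · have h4 : (1 : ℝ) - 4 * β ≠ 0 := by
      intro h; apply hb; linarith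
    rw [if_neg hb]
    field_simp [sq]
    unfold sq; ring

lemma quad {β ρ : ℝ} (hβ : 0 < β) (h1 : -1 < ρ) (h2 : ρ < 1) :
    (1 - Phi β ρ) ^ 2 - ρ ^ 2 = 4 * β * Phi β ρ ^ 2 := by
  have hs := sq_sq hβ h1 h2
  rw [sq_eq hβ h1 h2] at hs
  by_cases hb : β = 1 / 4
  · subst hb; unfold Phi; rw [if_pos rfl]; ring
  · have h4 : (1 : ℝ) - 4 * β ≠ 0 := by intro h; apply hb; linarith
    have key : (1 - 4*β) * ((1 - Phi β ρ) ^ 2 - ρ ^ 2 - 4 * β * Phi β ρ ^ 2) = 0 := by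
      linear_combination hs
    have := mul_eq_zero.1 key
    rcases this with h | h
    · exact absurd h h4
    · linarith

lemma Phi_pos {β ρ : ℝ} (hβ : 0 < β) (h1 : -1 < ρ) (h2 : ρ < 1) : 0 < Phi β ρ := by
  unfold Phi
  by_cases hb : β = 1 / 4
  · rw [if_pos hb]; nlinarith
  · rw [if_neg hb]
    change 0 < (1 - sq β ρ) / (1 - 4 * β)
    have hs2 := sq_sq hβ h1 h2
    have hs0 := (sq_pos hβ h1 h2).le
    have hr2 : (0:ℝ) < 1 - ρ ^ 2 := by nlinarith
    rcases lt_trichotomy β (1/4) with hlt | heq | hgt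
    · have h4 : (0:ℝ) < 1 - 4 * β := by linarith
      apply div_pos _ h4
      have : sq β ρ < 1 := by nlinarith [mul_pos h4 hr2]
      linarith
    · exact absurd heq hb
    · have h4 : (1:ℝ) - 4 * β < 0 := by linarith
      have : 1 < sq β ρ := by nlinarith [mul_pos (show (0:ℝ) < 4*β - 1 by linarith) hr2]
      apply div_pos_of_neg_of_neg (by linarith) h4

lemma Phi_lt_one {β ρ : ℝ} (hβ : 0 < β) (h1 : -1 < ρ) (h2 : ρ < 1) : Phi β ρ < 1 := by
  unfold Phi
  by_cases hb : β = 1 / 4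
  · rw [if_pos hb]; nlinarith
  · rw [if_neg hb]
    change (1 - sq β ρ) / (1 - 4 * β) < 1
    have hs2 := sq_sq hβ h1 h2
    have hs0 := (sq_pos hβ h1 h2).le
    have hr2 : (0:ℝ) ≤ ρ ^ 2 := sq_nonneg ρ
    rcases lt_trichotomy β (1/4) with hlt | heq | hgt
    · have h4 : (0:ℝ) < 1 - 4 * β := by linarith
      rw [div_lt_one h4]
      have hx : (0:ℝ) < 4*β + ρ^2 := by nlinarith
      have : 4 * β < sq β ρ := by nlinarith [mul_pos h4 hx]
      linarith
    · exact absurd heq hb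
    · have h4 : (1:ℝ) - 4 * β < 0 := by linarith
      rw [div_lt_iff_of_neg h4]
      have : sq β ρ < 4 * β := by nlinarith [mul_pos (show (0:ℝ) < 4*β - 1 by linarith) (show (0:ℝ) < 4*β + ρ^2 by nlinarith)]
      linarith

lemma one_sub_Phi_gt {β ρ : ℝ} (hβ : 0 < β) (h1 : -1 < ρ) (h2 : ρ < 1) :
    |ρ| < 1 - Phi β ρ := by
  have hq := quad hβ h1 h2
  have hp := Phi_pos hβ h1 h2
  have hl := Phi_lt_one hβ h1 h2
  have h1' : 0 < 1 - Phi β ρ := by linarith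
  have : ρ ^ 2 < (1 - Phi β ρ) ^ 2 := by nlinarith [mul_pos hβ (mul_pos hp hp)]
  have habs : |ρ| ^ 2 < (1 - Phi β ρ) ^ 2 := by rwa [sq_abs]
  nlinarith [abs_nonneg ρ, habs, h1']

lemma compress_eq {β ρ : ℝ} (hβ : 0 < β) (h1 : -1 < ρ) (h2 : ρ < 1) :
    compress β ρ = Phi β ρ * sq β ρ := by
  rw [sq_eq hβ h1 h2]
  unfold compress
  linear_combination quad hβ h1 h2

lemma compress_pos {β ρ : ℝ} (hβ : 0 < β) (h1 : -1 < ρ) (h2 : ρ < 1) :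
    0 < compress β ρ := by
  rw [compress_eq hβ h1 h2]
  exact mul_pos (Phi_pos hβ h1 h2) (sq_pos hβ h1 h2)

lemma deriv_Phi {β ρ : ℝ} (hβ : 0 < β) (h1 : -1 < ρ) (h2 : ρ < 1) :
    deriv (Phi β) ρ = -ρ / sq β ρ := by
  have hin := inner_pos hβ h1 h2
  have hsp := sq_pos hβ h1 h2
  by_cases hb : β = 1 / 4
  · have hPhi : Phi β = fun r : ℝ => (1 - r ^ 2) / 2 := by
      funext r; unfold Phi; rw [if_pos hb]
    have hsq1 : sq β ρ = 1 := by
      subst hb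
      have : (4 * (1/4 : ℝ) + ρ ^ 2 - 4 * (1/4) * ρ ^ 2) = 1 := by ring
      simp [sq, this]
    rw [hPhi, hsq1]
    have hd : HasDerivAt (fun r : ℝ => (1 - r ^ 2) / 2) (-ρ) ρ := by
      have hp : HasDerivAt (fun r : ℝ => r ^ 2) (2 * ρ) ρ := by
        simpa using hasDerivAt_pow 2 ρ
      have := ((hasDerivAt_const ρ (1:ℝ)).sub hp).div_const 2
      simpa using this.congr_deriv (by ring)
    rw [hd.deriv]; simp
  · have h4 : (1 : ℝ) - 4 * β ≠ 0 := by intro h; apply hb; linarith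
    have hPhi : Phi β = fun r : ℝ =>
        (1 - Real.sqrt (4 * β + r ^ 2 - 4 * β * r ^ 2)) / (1 - 4 * β) := by
      funext r; unfold Phi; rw [if_neg hb]
    rw [hPhi]
    have hp : HasDerivAt (fun r : ℝ => r ^ 2) (2 * ρ) ρ := by
      simpa using hasDerivAt_pow 2 ρ
    have hu : HasDerivAt (fun r : ℝ => 4 * β + r ^ 2 - 4 * β * r ^ 2)
        (2 * ρ - 4 * β * (2 * ρ)) ρ := by
      have := ((hasDerivAt_const ρ (4*β)).add hp).sub (hp.const_mul (4*β))
      exact this.congr_deriv (by ring)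
    have hs : HasDerivAt (fun r : ℝ => Real.sqrt (4 * β + r ^ 2 - 4 * β * r ^ 2))
        ((2 * ρ - 4 * β * (2 * ρ)) / (2 * sq β ρ)) ρ := by
      have hne : (4 * β + ρ ^ 2 - 4 * β * ρ ^ 2) ≠ 0 := ne_of_gt hin
      have := (Real.hasDerivAt_sqrt hne).comp ρ hu
      exact this.congr_deriv (by unfold sq; ring)
    have hd := ((hasDerivAt_const ρ (1:ℝ)).sub hs).div_const (1 - 4*β)
    rw [(show HasDerivAt (fun r : ℝ => (1 - Real.sqrt (4 * β + r ^ 2 - 4 * β * r ^ 2)) / (1 - 4 * β)) _ ρ from hd).deriv]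
    have hsne : sq β ρ ≠ 0 := ne_of_gt hsp
    field_simp
    ring

end DGrad
namespace DGrad

variable {d : ℕ}

lemma fin3_cases (a : Fin 3) : a = 0 ∨ a = 1 ∨ a = 2 := by
  fin_cases a <;> simp

lemma extOn_mem {S : Finset (Site d)} (ζ : {x : Site d // x ∈ S} → Fin 3) {x : Site d}
    (hx : x ∈ S) : extOn S ζ x = ζ ⟨x, hx⟩ := dif_pos hx

lemma extOn_not_mem {S : Finset (Site d)} (ζ : {x : Site d // x ∈ S} → Fin 3) {x : Site d}
    (hx : x ∉ S) : extOn S ζ x = 1 := dif_neg hx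

lemma wgt_sum (β ρ : ℝ) : ∑ v : Fin 3, wgt β ρ v = 1 := by
  rw [Fin.sum_univ_three]
  show (1 - Phi β ρ - ρ) / 2 + Phi β ρ + (1 - Phi β ρ + ρ) / 2 = 1
  ring

/-- Extend a `(Fin 3) × (B → Fin 3)` pair to a function on `insert a B`. -/
def insFun {a : Site d} {B : Finset (Site d)} (ha : a ∉ B)
    (p : Fin 3 × ({x : Site d // x ∈ B} → Fin 3)) : {x : Site d // x ∈ insert a B} → Fin 3 :=
  fun x => if h : (x : Site d) = a then p.1 else p.2 ⟨x, by
    rcases Finset.mem_insert.1 x.2 with h' | h'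
    · exact absurd h' h
    · exact h'⟩

lemma insFun_bijective {a : Site d} {B : Finset (Site d)} (ha : a ∉ B) :
    Function.Bijective (insFun (d := d) ha) := by
  constructor
  · intro p q hpq
    have h1 : p.1 = q.1 := by
      have := congrFun hpq ⟨a, Finset.mem_insert_self a B⟩
      simpa [insFun] using this
    have h2 : p.2 = q.2 := by
      funext x
      have hxa : (x : Site d) ≠ a := fun h => ha (h ▸ x.2)
      have := congrFun hpq ⟨x, Finset.mem_insert_of_mem x.2⟩
      simpa [insFun, hxa] using this
    exact Prod.ext h1 h2
  · intro ζ
    refine ⟨⟨ζ ⟨a, Finset.mem_insert_self a B⟩, fun x => ζ ⟨x, Finset.mem_insert_of_mem x.2⟩⟩, ?_⟩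
    funext x
    by_cases h : (x : Site d) = a
    · simp only [insFun, dif_pos h]
      exact congrArg ζ (Subtype.ext h.symm)
    · simp only [insFun, dif_neg h]

lemma prod_subtype_eq (S : Finset (Site d)) (ζ : {x : Site d // x ∈ S} → Fin 3)
    (w : Fin 3 → ℝ) :
    ∏ x : {x : Site d // x ∈ S}, w (ζ x) = ∏ x ∈ S, w (extOn S ζ x) := by
  calc ∏ x : {x : Site d // x ∈ S}, w (ζ x)
      = ∏ x : {x : Site d // x ∈ S}, w (extOn S ζ ↑x) :=
        Finset.prod_congr rfl fun x _ => by rw [extOn_mem ζ x.2]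
    _ = ∏ x ∈ S, w (extOn S ζ x) := Finset.prod_coe_sort S fun y => w (extOn S ζ y)

lemma Eexp_insert (β ρ : ℝ) {a : Site d} {B : Finset (Site d)} (ha : a ∉ B)
    (G : Fin 3 → Config d → ℝ)
    (hG : ∀ v (η η' : Config d), (∀ x ∈ B, η x = η' x) → G v η = G v η') :
    Eexp β ρ (insert a B) (fun η => G (η a) η)
      = ∑ v : Fin 3, wgt β ρ v * Eexp β ρ B (G v) := by
  unfold Eexp
  have hb := insFun_bijective (d := d) ha
  have key : ∀ p : Fin 3 × ({x : Site d // x ∈ B} → Fin 3),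
      wgt β ρ p.1 * ((∏ x, wgt β ρ (p.2 x)) * G p.1 (extOn B p.2))
        = (∏ x, wgt β ρ (insFun ha p x)) *
            (fun η => G (η a) η) (extOn (insert a B) (insFun ha p)) := by
    intro p
    have hea : extOn (insert a B) (insFun ha p) a = p.1 := by
      rw [extOn_mem _ (Finset.mem_insert_self a B)]
      simp [insFun]
    have heB : ∀ x ∈ B, extOn (insert a B) (insFun ha p) x = extOn B p.2 x := by
      intro x hx
      have hxa : x ≠ a := fun h => ha (h ▸ hx)
      rw [extOn_mem _ (Finset.mem_insert_of_mem hx), extOn_mem _ hx]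
      simp [insFun, hxa]
    have hprod : ∏ x, wgt β ρ (insFun ha p x)
        = wgt β ρ p.1 * ∏ x, wgt β ρ (p.2 x) := by
      rw [prod_subtype_eq (insert a B) (insFun ha p) (wgt β ρ),
        Finset.prod_insert ha, hea]
      congr 1
      rw [prod_subtype_eq B p.2 (wgt β ρ)]
      exact Finset.prod_congr rfl fun x hx => by rw [heB x hx]
    have hGeq : G p.1 (extOn (insert a B) (insFun ha p)) = G p.1 (extOn B p.2) :=
      hG _ _ _ heB
    simp only [hprod, hea, hGeq]
    ring
  rw [← Fintype.sum_bijective (insFun ha) hb _ _ key]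
  rw [Fintype.sum_prod_type]
  apply Finset.sum_congr rfl
  intro v _
  rw [Finset.mul_sum]

lemma Eexp_cylinder_union (β ρ : ℝ) {f : Config d → ℝ} {S B : Finset (Site d)}
    (hf : ∀ η η' : Config d, (∀ x ∈ S, η x = η' x) → f η = f η') (hSB : S ⊆ B)
    (C : Finset (Site d)) : Eexp β ρ (B ∪ C) f = Eexp β ρ B f := by
  induction C using Finset.induction_on with
  | empty => rw [Finset.union_empty]
  | @insert a C ha ih =>
    by_cases haB : a ∈ B ∪ C
    · rw [Finset.union_insert, Finset.insert_eq_self.2 haB, ih]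
    · rw [Finset.union_insert]
      have step := Eexp_insert β ρ haB (fun _ => f)
        (fun v η η' h => hf η η' (fun x hx => h x (Finset.mem_union_left _ (hSB hx))))
      have : Eexp β ρ (insert a (B ∪ C)) f
          = ∑ v : Fin 3, wgt β ρ v * Eexp β ρ (B ∪ C) f := step
      rw [this, ← Finset.sum_mul, wgt_sum, one_mul, ih]

lemma Eexp_cylinder_congr (β ρ : ℝ) {f : Config d → ℝ} {S B₁ B₂ : Finset (Site d)}
    (hf : ∀ η η' : Config d, (∀ x ∈ S, η x = η' x) → f η = f η')
    (h1 : S ⊆ B₁) (h2 : S ⊆ B₂) : Eexp β ρ B₁ f = Eexp β ρ B₂ f := by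
  have e1 := Eexp_cylinder_union β ρ hf h1 B₂
  have e2 := Eexp_cylinder_union β ρ hf h2 B₁
  rw [← e1, Finset.union_comm, e2]

lemma Eexp_congr (β ρ : ℝ) (B : Finset (Site d)) {f g : Config d → ℝ}
    (h : ∀ η, f η = g η) : Eexp β ρ B f = Eexp β ρ B g := by
  have : f = g := funext h
  rw [this]

lemma Eexp_add (β ρ : ℝ) (B : Finset (Site d)) (f g : Config d → ℝ) :
    Eexp β ρ B (fun η => f η + g η) = Eexp β ρ B f + Eexp β ρ B g := by
  unfold Eexp
  rw [← Finset.sum_add_distrib]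
  exact Finset.sum_congr rfl fun ζ _ => by ring

lemma Eexp_sub (β ρ : ℝ) (B : Finset (Site d)) (f g : Config d → ℝ) :
    Eexp β ρ B (fun η => f η - g η) = Eexp β ρ B f - Eexp β ρ B g := by
  unfold Eexp
  rw [← Finset.sum_sub_distrib]
  exact Finset.sum_congr rfl fun ζ _ => by ring

lemma Eexp_const_mul (β ρ : ℝ) (B : Finset (Site d)) (c : ℝ) (f : Config d → ℝ) :
    Eexp β ρ B (fun η => c * f η) = c * Eexp β ρ B f := by
  unfold Eexp
  rw [Finset.mul_sum]
  exact Finset.sum_congr rfl fun ζ _ => by ring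

lemma Eexp_finsum (β ρ : ℝ) (B : Finset (Site d)) {ι : Type*} (X : Finset ι)
    (F : ι → Config d → ℝ) :
    Eexp β ρ B (fun η => ∑ x ∈ X, F x η) = ∑ x ∈ X, Eexp β ρ B (F x) := by
  unfold Eexp
  rw [Finset.sum_comm]
  exact Finset.sum_congr rfl fun ζ _ => by rw [Finset.mul_sum]

lemma Eexp_nonneg (β ρ : ℝ) (B : Finset (Site d)) {f : Config d → ℝ}
    (hw : ∀ v, 0 ≤ wgt β ρ v) (hf : ∀ η, 0 ≤ f η) : 0 ≤ Eexp β ρ B f := by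
  apply Finset.sum_nonneg
  intro ζ _
  exact mul_nonneg (Finset.prod_nonneg fun x _ => hw _) (hf _)

end DGrad
namespace DGrad

variable {d : ℕ}

/-! ### Translation -/

/-- The translate `B + x` of a finite set of sites. -/
def shiftB (B : Finset (Site d)) (x : Site d) : Finset (Site d) := B.image (· + x)

lemma mem_shiftB {B : Finset (Site d)} {x z : Site d} : z ∈ shiftB B x ↔ z - x ∈ B := by
  constructor
  · rintro h
    obtain ⟨b, hb, hbe⟩ := Finset.mem_image.1 h
    rwa [show z - x = b by rw [← hbe]; abel]
  · intro h
    exact Finset.mem_image.2 ⟨z - x, h, by abel⟩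

/-- Transport of a finite configuration along translation. -/
def shiftFun (B : Finset (Site d)) (x : Site d)
    (ζ : {z : Site d // z ∈ B} → Fin 3) : {z : Site d // z ∈ shiftB B x} → Fin 3 :=
  fun z => ζ ⟨(z : Site d) - x, mem_shiftB.1 z.2⟩

lemma extOn_shiftFun (B : Finset (Site d)) (x : Site d)
    (ζ : {z : Site d // z ∈ B} → Fin 3) :
    extOn (shiftB B x) (shiftFun B x ζ) = shiftCfg x (extOn B ζ) := by
  funext z
  by_cases h : z ∈ shiftB B x
  · rw [extOn_mem _ h]
    show ζ _ = extOn B ζ (z - x)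
    rw [extOn_mem _ (mem_shiftB.1 h)]
  · rw [extOn_not_mem _ h]
    show (1 : Fin 3) = extOn B ζ (z - x)
    rw [extOn_not_mem _ (fun hc => h (mem_shiftB.2 hc))]

lemma shiftFun_bijective (B : Finset (Site d)) (x : Site d) :
    Function.Bijective (shiftFun B x) := by
  rw [Function.bijective_iff_has_inverse]
  refine ⟨fun ζ' b => ζ' ⟨(b : Site d) + x, mem_shiftB.2 (by simpa using b.2)⟩, ?_, ?_⟩
  · intro ζ
    funext b
    show ζ _ = ζ b
    exact congrArg ζ (Subtype.ext (by simp))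
  · intro ζ'
    funext z
    show ζ' _ = ζ' z
    exact congrArg ζ' (Subtype.ext (by simp))

lemma Eexp_shift (β ρ : ℝ) (B : Finset (Site d)) (x : Site d) (u : Config d → ℝ) :
    Eexp β ρ (shiftB B x) u = Eexp β ρ B (fun η => u (shiftCfg x η)) := by
  unfold Eexp
  refine (Fintype.sum_bijective (shiftFun B x) (shiftFun_bijective B x) _ _ ?_).symm
  intro ζ
  have hprod : (∏ z, wgt β ρ (ζ z)) = ∏ z, wgt β ρ (shiftFun B x ζ z) := by
    refine Fintype.prod_bijective
      (fun b : {z : Site d // z ∈ B} => (⟨(b : Site d) + x, mem_shiftB.2 (by simpa using b.2)⟩ :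
        {z : Site d // z ∈ shiftB B x})) ?_ _ _ ?_
    · rw [Function.bijective_iff_has_inverse]
      refine ⟨fun z => ⟨(z : Site d) - x, mem_shiftB.1 z.2⟩, ?_, ?_⟩
      · intro b; exact Subtype.ext (by simp)
      · intro z; exact Subtype.ext (by simp)
    · intro b
      show wgt β ρ (ζ b) = wgt β ρ (ζ _)
      exact congrArg (fun c => wgt β ρ (ζ c)) (Subtype.ext (by simp)).symm
  rw [hprod, extOn_shiftFun]

/-! ### The flip as a change of variables -/

lemma cfgFlip_of_ne {x y z : Site d} (η : Config d) (hzx : z ≠ x) (hzy : z ≠ y) :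
    cfgFlip x y η z = η z := by simp [cfgFlip, hzx, hzy]

lemma cfgFlip_flip {x y : Site d} (hxy : x ≠ y) (η : Config d) :
    cfgFlip y x (cfgFlip x y η) = η := by
  have hyx : y ≠ x := hxy.symm
  funext z
  by_cases hzx : z = x
  · subst hzx
    rcases fin3_cases (η z) with hx|hx|hx <;> rcases fin3_cases (η y) with hy|hy|hy <;>
      simp [cfgFlip, hxy, hyx, hx, hy]
  · by_cases hzy : z = y
    · subst hzy
      rcases fin3_cases (η x) with hx|hx|hx <;> rcases fin3_cases (η z) with hy|hy|hy <;>
        simp [cfgFlip, hxy, hyx, hx, hy]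
    · rw [cfgFlip_of_ne _ hzy hzx, cfgFlip_of_ne _ hzx hzy]

/-- The flip acting on finite configurations on a box containing `0` and `e`. -/
def flipFun (e : Site d) (B : Finset (Site d)) (ζ : {z : Site d // z ∈ B} → Fin 3) :
    {z : Site d // z ∈ B} → Fin 3 :=
  fun z => cfgFlip (0 : Site d) e (extOn B ζ) (z : Site d)

lemma extOn_flipFun {e : Site d} {B : Finset (Site d)} (h0B : (0 : Site d) ∈ B) (heB : e ∈ B)
    (ζ : {z : Site d // z ∈ B} → Fin 3) :
    extOn B (flipFun e B ζ) = cfgFlip (0 : Site d) e (extOn B ζ) := by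
  funext z
  by_cases h : z ∈ B
  · rw [extOn_mem _ h]; rfl
  · rw [extOn_not_mem _ h,
      cfgFlip_of_ne _ (fun hc => h (by rw [hc]; exact h0B)) (fun hc => h (by rw [hc]; exact heB)),
      extOn_not_mem _ h]

lemma flipFun_bijective {e : Site d} (hne : (0 : Site d) ≠ e) {B : Finset (Site d)}
    (h0B : (0 : Site d) ∈ B) (heB : e ∈ B) :
    Function.Bijective (flipFun e B) := by
  rw [Function.bijective_iff_has_inverse]
  refine ⟨fun ζ z => cfgFlip e (0 : Site d) (extOn B ζ) (z : Site d), ?_, ?_⟩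
  · intro ζ
    funext z
    show cfgFlip e 0 (extOn B (flipFun e B ζ)) _ = _
    rw [extOn_flipFun h0B heB, cfgFlip_flip hne, extOn_mem _ z.2]
  · intro ζ
    funext z
    show cfgFlip (0:Site d) e (extOn B (fun z => cfgFlip e (0 : Site d) (extOn B ζ) (z : Site d))) _ = _
    have : extOn B (fun z : {z : Site d // z ∈ B} => cfgFlip e (0 : Site d) (extOn B ζ) (z : Site d))
        = cfgFlip e (0 : Site d) (extOn B ζ) := by
      funext v
      by_cases h : v ∈ B
      · rw [extOn_mem _ h]
      · rw [extOn_not_mem _ h,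
          cfgFlip_of_ne _ (fun hc => h (by rw [hc]; exact heB)) (fun hc => h (by rw [hc]; exact h0B)),
          extOn_not_mem _ h]
    rw [this, cfgFlip_flip hne.symm, extOn_mem _ z.2]

lemma prod_two_point {α : Type*} [Fintype α] [DecidableEq α] (f g : α → ℝ) (a b : α)
    (hab : a ≠ b) (h : ∀ z, z ≠ a → z ≠ b → f z = g z) :
    (∏ z, f z) * (g a * g b) = (∏ z, g z) * (f a * f b) := by
  have hba : b ∈ (Finset.univ : Finset α).erase a :=
    Finset.mem_erase.2 ⟨fun hc => hab hc.symm, Finset.mem_univ b⟩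
  have hf : ∏ z, f z = f a * (f b * ∏ z ∈ ((Finset.univ : Finset α).erase a).erase b, f z) := by
    rw [Finset.mul_prod_erase _ f hba, Finset.mul_prod_erase _ f (Finset.mem_univ a)]
  have hg : ∏ z, g z = g a * (g b * ∏ z ∈ ((Finset.univ : Finset α).erase a).erase b, g z) := by
    rw [Finset.mul_prod_erase _ g hba, Finset.mul_prod_erase _ g (Finset.mem_univ a)]
  have hrest : ∏ z ∈ ((Finset.univ : Finset α).erase a).erase b, f z
      = ∏ z ∈ ((Finset.univ : Finset α).erase a).erase b, g z := by
    refine Finset.prod_congr rfl fun z hz => ?_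
    have hz' := Finset.mem_erase.1 hz
    have hz'' := Finset.mem_erase.1 hz'.2
    exact h z hz''.1 hz'.1
  rw [hf, hg, hrest]; ring

lemma Eexp_flip (β ρ Cp Cm CE CA CC : ℝ) {e : Site d} (hne : (0 : Site d) ≠ e)
    {B : Finset (Site d)} (h0B : (0 : Site d) ∈ B) (heB : e ∈ B)
    (hw : ∀ v, 0 < wgt β ρ v)
    (hdb : CA * (wgt β ρ 2 * wgt β ρ 0) = CC * (wgt β ρ 1 * wgt β ρ 1))
    (H : Config d → ℝ) :
    Eexp β ρ B (fun η => rate Cp Cm CE CA CC (0 : Site d) e η * H (cfgFlip (0 : Site d) e η))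
      = Eexp β ρ B (fun η => rate Cp Cm CE CA CC e (0 : Site d) η * H η) := by
  have he0 : e ≠ (0 : Site d) := hne.symm
  unfold Eexp
  refine Fintype.sum_bijective (flipFun e B) (flipFun_bijective hne h0B heB) _ _ ?_
  intro ζ
  rw [extOn_flipFun h0B heB]
  set η := extOn B ζ with hη
  set η' := cfgFlip (0 : Site d) e η with hη'
  have hz0 : ζ ⟨(0 : Site d), h0B⟩ = η 0 := (extOn_mem ζ h0B).symm
  have hze : ζ ⟨e, heB⟩ = η e := (extOn_mem ζ heB).symm
  have hz0' : flipFun e B ζ ⟨(0 : Site d), h0B⟩ = η' 0 := rfl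
  have hze' : flipFun e B ζ ⟨e, heB⟩ = η' e := rfl
  have hWW : (∏ z, wgt β ρ (ζ z)) * (wgt β ρ (η' 0) * wgt β ρ (η' e))
      = (∏ z, wgt β ρ (flipFun e B ζ z)) * (wgt β ρ (η 0) * wgt β ρ (η e)) := by
    rw [← hz0, ← hze, ← hz0', ← hze']
    refine prod_two_point (fun z => wgt β ρ (ζ z)) (fun z => wgt β ρ (flipFun e B ζ z))
      ⟨(0 : Site d), h0B⟩ ⟨e, heB⟩ (fun hc => hne (congrArg Subtype.val hc)) ?_
    intro z hz0'' hze''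
    show wgt β ρ (ζ z) = wgt β ρ (cfgFlip (0 : Site d) e η (z : Site d))
    rw [cfgFlip_of_ne _ (fun hc => hz0'' (Subtype.ext hc)) (fun hc => hze'' (Subtype.ext hc)),
      hη, extOn_mem _ z.2]
  have core : rate Cp Cm CE CA CC (0 : Site d) e η * (wgt β ρ (η 0) * wgt β ρ (η e))
      = rate Cp Cm CE CA CC e (0 : Site d) η' * (wgt β ρ (η' 0) * wgt β ρ (η' e)) := by
    have h'0 : η' 0 = if η 0 = 2 ∧ η e = 0 then 1 else if η 0 = 1 ∧ η e = 1 then 0 else η e := by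
      simp [hη', cfgFlip]
    have h'e : η' e = if η 0 = 2 ∧ η e = 0 then 1 else if η 0 = 1 ∧ η e = 1 then 2 else η 0 := by
      simp [hη', cfgFlip, he0]
    rcases fin3_cases (η 0) with h0|h0|h0 <;> rcases fin3_cases (η e) with he'|he'|he' <;>
        (rw [h0, he'] at h'0 h'e; simp at h'0 h'e; simp [rate, h0, he', h'0, h'e]) <;>
      first
        | exact Or.inl (mul_comm _ _)
        | tauto
        | linear_combination hdb
        | linear_combination (-1 : ℝ) * hdb
  have hpos : (0 : ℝ) < wgt β ρ (η 0) * wgt β ρ (η e) := mul_pos (hw _) (hw _)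
  apply mul_right_cancel₀ (ne_of_gt hpos)
  linear_combination (H η' * (∏ z, wgt β ρ (ζ z))) * core
    + (rate Cp Cm CE CA CC e (0 : Site d) η' * H η') * hWW

end DGrad
namespace DGrad

variable {d : ℕ}

lemma box_mono {m n : ℕ} (h : m ≤ n) : box d m ⊆ box d n := by
  intro x hx
  have hx' : ∀ i, x i ∈ Finset.Icc (-(m : ℤ)) (m : ℤ) := Fintype.mem_piFinset.1 hx
  refine Fintype.mem_piFinset.2 fun i => ?_
  have hi := Finset.mem_Icc.1 (hx' i)
  rw [Finset.mem_Icc]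
  omega

lemma exists_box (S : Finset (Site d)) : ∃ n : ℕ, S ⊆ box d n := by
  refine ⟨S.sup fun x => Finset.univ.sup fun i => (x i).natAbs, fun x hx => ?_⟩
  refine Fintype.mem_piFinset.2 fun i => ?_
  rw [Finset.mem_Icc]
  have ha : (Finset.univ.sup fun j => (x j).natAbs)
      ≤ S.sup fun y => Finset.univ.sup fun i => (y i).natAbs :=
    Finset.le_sup (f := fun y => Finset.univ.sup fun i => (y i).natAbs) hx
  have hb : (x i).natAbs ≤ Finset.univ.sup fun j => (x j).natAbs :=
    Finset.le_sup (f := fun j => (x j).natAbs) (Finset.mem_univ i)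
  have h1 := le_trans hb ha
  have h2 : |x i| ≤ ((S.sup fun y => Finset.univ.sup fun i => (y i).natAbs : ℕ) : ℤ) := by
    rw [Int.abs_eq_natAbs]
    exact_mod_cast h1
  exact abs_le.1 h2

lemma nuInt_eq_Eexp (β ρ : ℝ) {f : Config d → ℝ} {S : Finset (Site d)}
    (hf : ∀ η η' : Config d, (∀ x ∈ S, η x = η' x) → f η = f η') {n₀ : ℕ}
    (hS : S ⊆ box d n₀) :
    nuInt β ρ f = Eexp β ρ (box d n₀) f := by
  apply Filter.Tendsto.limUnder_eq
  refine Filter.Tendsto.congr' ?_ tendsto_const_nhds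
  filter_upwards [Filter.eventually_ge_atTop n₀] with n hn
  exact Eexp_cylinder_congr β ρ hf hS (hS.trans (box_mono hn))

lemma Eexp_empty_const (β ρ : ℝ) (c : ℝ) : Eexp (d := d) β ρ ∅ (fun _ => c) = c := by
  unfold Eexp
  haveI : IsEmpty {x : Site d // x ∈ (∅ : Finset (Site d))} := by
    constructor; rintro ⟨x, hx⟩; exact absurd hx (Finset.notMem_empty x)
  rw [Fintype.sum_unique, Fintype.prod_empty, one_mul]

lemma Eexp_indep (β ρ : ℝ) {g : Config d → ℝ} {S : Finset (Site d)}
    (hg : ∀ η η' : Config d, (∀ x ∈ S, η x = η' x) → g η = g η') (phiF : Fin 3 → ℝ)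
    {z : Site d} (hz : z ∉ S) {B : Finset (Site d)} (hSB : S ⊆ B) (hzB : z ∈ B) :
    Eexp β ρ B (fun η => phiF (η z) * g η)
      = (∑ v : Fin 3, wgt β ρ v * phiF v) * Eexp β ρ B g := by
  have hcyl : ∀ η η' : Config d, (∀ x ∈ insert z S, η x = η' x) →
      phiF (η z) * g η = phiF (η' z) * g η' := by
    intro η η' h
    rw [h z (Finset.mem_insert_self z S),
      hg η η' (fun x hx => h x (Finset.mem_insert_of_mem hx))]
  have h1 : Eexp β ρ B (fun η => phiF (η z) * g η)
      = Eexp β ρ (insert z S) (fun η => phiF (η z) * g η) :=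
    Eexp_cylinder_congr β ρ hcyl (Finset.insert_subset hzB hSB) (subset_refl _)
  have h2 := Eexp_insert β ρ hz (fun v η => phiF v * g η) (fun v η η' h => by
    show phiF v * g η = phiF v * g η'
    rw [hg η η' h])
  rw [h1, h2]
  have h4 : Eexp β ρ S g = Eexp β ρ B g := Eexp_cylinder_congr β ρ hg (subset_refl S) hSB
  rw [Finset.sum_congr rfl (fun v _ => by
    rw [Eexp_const_mul β ρ S (phiF v) g, h4, ← mul_assoc]), ← Finset.sum_mul]

lemma rate_nonneg {Cp Cm CE CA CC : ℝ} (hCp : 0 ≤ Cp) (hCm : 0 ≤ Cm) (hCE : 0 ≤ CE)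
    (hCA : 0 ≤ CA) (hCC : 0 ≤ CC) (x y : Site d) (η : Config d) :
    0 ≤ rate Cp Cm CE CA CC x y η := by
  unfold rate
  split_ifs <;> first | assumption | exact le_rfl

lemma rate_congr {Cp Cm CE CA CC : ℝ} (x y : Site d) {η η' : Config d}
    (hx : η x = η' x) (hy : η y = η' y) :
    rate Cp Cm CE CA CC x y η = rate Cp Cm CE CA CC x y η' := by
  unfold rate
  rw [hx, hy]

lemma cfgFlip_congr (x y : Site d) {η η' : Config d} {w : Site d}
    (hx : η x = η' x) (hy : η y = η' y) (hw : η w = η' w) :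
    cfgFlip x y η w = cfgFlip x y η' w := by
  unfold cfgFlip
  rw [hx, hy, hw]

end DGrad
namespace DGrad

variable {d : ℕ}

lemma zero_ne_ee (d : ℕ) (i : Fin d) : (0 : Site d) ≠ ee d i := by
  intro h
  have h2 := congrFun h i
  simp [ee] at h2

/-- Value table for the integrand of the Dirichlet form at `g = 0`. -/
def KK (Cp Cm CE CA CC : ℝ) : Fin 3 → Fin 3 → ℝ := fun a b =>
  if a = 2 ∧ b = 1 then Cp else if a = 1 ∧ b = 0 then Cm else if a = 0 ∧ b = 2 then 4 * CE
  else if a = 2 ∧ b = 0 then CA else if a = 1 ∧ b = 1 then CC else 0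

lemma dirichletForm_zero (hd : 0 < d) (Cp Cm CE CA CC ρ : ℝ) :
    dirichletForm Cp Cm CE CA CC ρ (⟨0, hd⟩ : Fin d) 1 (fun _ => 0)
      = Cp * (wgt (CC/CA) ρ 2 * wgt (CC/CA) ρ 1) + Cm * (wgt (CC/CA) ρ 1 * wgt (CC/CA) ρ 0)
        + 4 * CE * (wgt (CC/CA) ρ 0 * wgt (CC/CA) ρ 2)
        + CA * (wgt (CC/CA) ρ 2 * wgt (CC/CA) ρ 0)
        + CC * (wgt (CC/CA) ρ 1 * wgt (CC/CA) ρ 1) := by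
  set i : Fin d := ⟨0, hd⟩
  set e : Site d := ee d i with he
  have hne : (0 : Site d) ≠ e := zero_ne_ee d i
  have hgz : ∀ η : Config d, gradGammaSum i (fun _ => 0) η = 0 := by
    intro η; unfold gradGammaSum; simp
  have hfeq : (fun η : Config d =>
      rate Cp Cm CE CA CC (0 : Site d) e η *
        (1 * (((spin (cfgFlip (0 : Site d) e η) (0 : Site d) : ℤ) : ℝ)
          - ((spin η (0 : Site d) : ℤ) : ℝ)) + gradGammaSum i (fun _ => 0) η) ^ 2)
      = fun η : Config d => KK Cp Cm CE CA CC (η 0) (η e) := by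
    funext η
    rw [hgz η]
    rcases fin3_cases (η 0) with h0|h0|h0 <;> rcases fin3_cases (η e) with he'|he'|he' <;>
      simp [rate, cfgFlip, spin, KK, hne.symm, h0, he'] <;> (try norm_num) <;> (try ring)
  have hcyl : ∀ η η' : Config d, (∀ x ∈ ({(0 : Site d), e} : Finset (Site d)), η x = η' x) →
      KK Cp Cm CE CA CC (η 0) (η e) = KK Cp Cm CE CA CC (η' 0) (η' e) := by
    intro η η' h
    rw [h 0 (Finset.mem_insert_self _ _), h e (Finset.mem_insert_of_mem (Finset.mem_singleton_self e))]
  obtain ⟨n, hn⟩ := exists_box ({(0 : Site d), e} : Finset (Site d))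
  unfold dirichletForm
  rw [hfeq, nuInt_eq_Eexp (CC/CA) ρ hcyl hn,
    Eexp_cylinder_congr (CC/CA) ρ hcyl hn (subset_refl _)]
  have h0e : (0 : Site d) ∉ ({e} : Finset (Site d)) := by
    rw [Finset.mem_singleton]; exact hne
  have h1 := Eexp_insert (CC/CA) ρ h0e (fun v η => KK Cp Cm CE CA CC v (η e))
    (fun v η η' h => by
      show KK Cp Cm CE CA CC v (η e) = KK Cp Cm CE CA CC v (η' e)
      rw [h e (Finset.mem_singleton_self e)])
  rw [show ({(0 : Site d), e} : Finset (Site d)) = insert (0 : Site d) {e} from rfl, h1]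
  have h2 : ∀ v : Fin 3, Eexp (CC/CA) ρ ({e} : Finset (Site d))
      (fun η => KK Cp Cm CE CA CC v (η e)) = ∑ u : Fin 3, wgt (CC/CA) ρ u * KK Cp Cm CE CA CC v u := by
    intro v
    have h3 := Eexp_insert (CC/CA) ρ (Finset.notMem_empty e)
      (fun u η => KK Cp Cm CE CA CC v u) (fun u η η' _ => rfl)
    rw [show ({e} : Finset (Site d)) = insert e ∅ from rfl, h3]
    exact Finset.sum_congr rfl fun u _ => by rw [Eexp_empty_const]
  rw [Finset.sum_congr rfl fun v _ => by rw [h2 v]]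
  rw [Fin.sum_univ_three]
  rw [Fin.sum_univ_three, Fin.sum_univ_three, Fin.sum_univ_three]
  simp [KK]
  ring

end DGrad
namespace DGrad

/-- The single-site "potential" realizing the current as a gradient. -/
def phiF (Cp Cm : ℝ) : Fin 3 → ℝ := fun v => if v = 2 then Cp else if v = 0 then -Cm else 0

end DGrad
namespace DGrad

variable {d : ℕ}

lemma dirichletForm_ge (hd : 0 < d) {Cp Cm CE CA CC ρ : ℝ}
    (hw : ∀ v, 0 < wgt (CC/CA) ρ v)
    (hdb : CA * (wgt (CC/CA) ρ 2 * wgt (CC/CA) ρ 0)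
      = CC * (wgt (CC/CA) ρ 1 * wgt (CC/CA) ρ 1))
    (hCp : 0 ≤ Cp) (hCm : 0 ≤ Cm) (hCE : 0 ≤ CE) (hCA : 0 ≤ CA) (hCC : 0 ≤ CC)
    (hgrad : Cp + Cm - CA - 2 * CE = 0)
    (g : Config d → ℝ) (hgc : IsCylinder g) :
    dirichletForm Cp Cm CE CA CC ρ (⟨0, hd⟩ : Fin d) 1 (fun _ => 0)
      ≤ dirichletForm Cp Cm CE CA CC ρ (⟨0, hd⟩ : Fin d) 1 g := by
  obtain ⟨S, hg⟩ := hgc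
  set i : Fin d := ⟨0, hd⟩ with hi
  set e : Site d := ee d i with he
  have hne : (0 : Site d) ≠ e := zero_ne_ee d i
  set β : ℝ := CC / CA with hβ
  -- the finite set of translates that matter
  set X : Finset (Site d) := S ∪ S.image (· - e) with hX
  have hSX : S ⊆ X := Finset.subset_union_left
  have hXterm : ∀ x : Site d, x ∉ X → ∀ η : Config d,
      g (shiftCfg x (cfgFlip (0 : Site d) e η)) - g (shiftCfg x η) = 0 := by
    intro x hx η
    rw [sub_eq_zero]
    apply hg
    intro z hz
    show cfgFlip (0 : Site d) e η (z - x) = η (z - x)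
    apply cfgFlip_of_ne
    · intro hc
      apply hx
      rw [hX]
      apply Finset.mem_union_left
      rwa [show x = z from by
        have h1 : z = x := sub_eq_zero.1 hc
        rw [h1]]
    · intro hc
      apply hx
      rw [hX]
      apply Finset.mem_union_right
      exact Finset.mem_image.2 ⟨z, hz, by rw [← hc]; abel⟩
  have hGa : ∀ η : Config d, gradGammaSum i g η
      = ∑ x ∈ X, (g (shiftCfg x (cfgFlip (0 : Site d) e η)) - g (shiftCfg x η)) := by
    intro η
    exact tsum_eq_sum (fun x hx => hXterm x hx η)
  -- a big box `B` containing everything we need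
  set T : Finset (Site d) :=
    insert (0 : Site d) (insert e (X.biUnion fun x => S.image (· - x))) with hT
  set X' : Finset (Site d) := X.image (e + ·) with hX'
  set Y : Finset (Site d) := X ∪ X' with hY
  obtain ⟨n, hn⟩ := exists_box (T ∪ Y)
  set B : Finset (Site d) := box d n with hB
  have hTB : T ⊆ B := Finset.union_subset_iff.1 hn |>.1
  have hYB : Y ⊆ B := Finset.union_subset_iff.1 hn |>.2
  have h0B : (0 : Site d) ∈ B := hTB (Finset.mem_insert_self _ _)
  have heB : e ∈ B := hTB (Finset.mem_insert_of_mem (Finset.mem_insert_self _ _))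
  have himB : ∀ x ∈ X, ∀ z ∈ S, z - x ∈ B := fun x hx z hz =>
    hTB (Finset.mem_insert_of_mem (Finset.mem_insert_of_mem
      (Finset.mem_biUnion.2 ⟨x, hx, Finset.mem_image_of_mem _ hz⟩)))
  have hSB : S ⊆ B := fun z hz => hYB (Finset.mem_union_left _ (hSX hz))
  have hSX' : S ⊆ X' := fun s hs =>
    Finset.mem_image.2 ⟨s - e, Finset.mem_union_right _ (Finset.mem_image_of_mem _ hs),
      by abel⟩
  -- cylinder property of the integrands
  have hagree : ∀ η η' : Config d, (∀ z ∈ T, η z = η' z) →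
      (η 0 = η' 0) ∧ (η e = η' e) ∧
      (∀ x ∈ X, g (shiftCfg x η) = g (shiftCfg x η')) ∧
      (∀ x ∈ X, g (shiftCfg x (cfgFlip (0 : Site d) e η))
        = g (shiftCfg x (cfgFlip (0 : Site d) e η'))) := by
    intro η η' h
    have h0 : η 0 = η' 0 := h 0 (Finset.mem_insert_self _ _)
    have hee : η e = η' e := h e (Finset.mem_insert_of_mem (Finset.mem_insert_self _ _))
    have hzx : ∀ x ∈ X, ∀ z ∈ S, η (z - x) = η' (z - x) := fun x hx z hz =>
      h (z - x) (Finset.mem_insert_of_mem (Finset.mem_insert_of_mem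
        (Finset.mem_biUnion.2 ⟨x, hx, Finset.mem_image_of_mem _ hz⟩)))
    refine ⟨h0, hee, fun x hx => hg _ _ fun z hz => hzx x hx z hz, fun x hx => hg _ _ ?_⟩
    intro z hz
    exact cfgFlip_congr 0 e h0 hee (hzx x hx z hz)
  have hcylg : ∀ η η' : Config d, (∀ z ∈ T, η z = η' z) →
      (rate Cp Cm CE CA CC (0 : Site d) e η *
        (1 * (((spin (cfgFlip (0 : Site d) e η) (0 : Site d) : ℤ) : ℝ)
          - ((spin η (0 : Site d) : ℤ) : ℝ)) + gradGammaSum i g η) ^ 2)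
      = (rate Cp Cm CE CA CC (0 : Site d) e η' *
        (1 * (((spin (cfgFlip (0 : Site d) e η') (0 : Site d) : ℤ) : ℝ)
          - ((spin η' (0 : Site d) : ℤ) : ℝ)) + gradGammaSum i g η') ^ 2) := by
    intro η η' h
    obtain ⟨h0, hee, hsh, hshf⟩ := hagree η η' h
    have hr : rate Cp Cm CE CA CC (0 : Site d) e η = rate Cp Cm CE CA CC (0 : Site d) e η' :=
      rate_congr _ _ h0 hee
    have hfl : cfgFlip (0 : Site d) e η 0 = cfgFlip (0 : Site d) e η' 0 :=
      cfgFlip_congr 0 e h0 hee h0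
    have hsp : spin (cfgFlip (0 : Site d) e η) 0 = spin (cfgFlip (0 : Site d) e η') 0 := by
      unfold spin; rw [hfl]
    have hsp2 : spin η (0 : Site d) = spin η' (0 : Site d) := by unfold spin; rw [h0]
    have hΓ : gradGammaSum i g η = gradGammaSum i g η' := by
      rw [hGa, hGa]
      exact Finset.sum_congr rfl fun x hx => by rw [hsh x hx, hshf x hx]
    rw [hr, hsp, hsp2, hΓ]
  have hcyl0 : ∀ η η' : Config d, (∀ z ∈ T, η z = η' z) →
      (rate Cp Cm CE CA CC (0 : Site d) e η *
        (1 * (((spin (cfgFlip (0 : Site d) e η) (0 : Site d) : ℤ) : ℝ)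
          - ((spin η (0 : Site d) : ℤ) : ℝ)) + gradGammaSum i (fun _ => 0) η) ^ 2)
      = (rate Cp Cm CE CA CC (0 : Site d) e η' *
        (1 * (((spin (cfgFlip (0 : Site d) e η') (0 : Site d) : ℤ) : ℝ)
          - ((spin η' (0 : Site d) : ℤ) : ℝ)) + gradGammaSum i (fun _ => 0) η') ^ 2) := by
    intro η η' h
    obtain ⟨h0, hee, _, _⟩ := hagree η η' h
    have hr : rate Cp Cm CE CA CC (0 : Site d) e η = rate Cp Cm CE CA CC (0 : Site d) e η' :=
      rate_congr _ _ h0 hee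
    have hfl : cfgFlip (0 : Site d) e η 0 = cfgFlip (0 : Site d) e η' 0 :=
      cfgFlip_congr 0 e h0 hee h0
    have hsp : spin (cfgFlip (0 : Site d) e η) 0 = spin (cfgFlip (0 : Site d) e η') 0 := by
      unfold spin; rw [hfl]
    have hsp2 : spin η (0 : Site d) = spin η' (0 : Site d) := by unfold spin; rw [h0]
    have hΓ : gradGammaSum i (fun _ => 0) η = gradGammaSum i (fun _ => 0) η' := by
      unfold gradGammaSum; simp
    rw [hr, hsp, hsp2, hΓ]
  -- write both Dirichlet forms over the common box, via `nuInt_eq_Eexp`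
  unfold dirichletForm
  rw [nuInt_eq_Eexp (CC/CA) ρ hcylg hTB, nuInt_eq_Eexp (CC/CA) ρ hcyl0 hTB]
  -- zero Γ for the zero function
  have hgz : ∀ η : Config d, gradGammaSum i (fun _ => 0) η = 0 := by
    intro η; unfold gradGammaSum; simp
  -- the "current + gradient" function, integrated against translates of g
  set W : Site d → ℝ := fun z => Eexp (CC/CA) ρ (box d n)
    (fun ζ => phiF Cp Cm (ζ z) * g ζ) with hW
  -- translation identity
  have htrans : ∀ x ∈ X, ∀ y : Site d, y ∈ box d n → y + x ∈ box d n →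
      Eexp (CC/CA) ρ (box d n) (fun η => phiF Cp Cm (η y) * g (shiftCfg x η)) = W (y + x) := by
    intro x hx y hyB hyxB
    have hcylu : ∀ ζ ζ' : Config d, (∀ z ∈ insert (y + x) S, ζ z = ζ' z) →
        phiF Cp Cm (ζ (y + x)) * g ζ = phiF Cp Cm (ζ' (y + x)) * g ζ' := by
      intro ζ ζ' hzz
      rw [hzz (y + x) (Finset.mem_insert_self _ _),
        hg ζ ζ' (fun z hz => hzz z (Finset.mem_insert_of_mem hz))]
    have h1 : (fun η : Config d => phiF Cp Cm (η y) * g (shiftCfg x η))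
        = fun η => phiF Cp Cm (shiftCfg x η (y + x)) * g (shiftCfg x η) := by
      funext η
      have h2 : shiftCfg x η (y + x) = η y := by
        show η (y + x - x) = η y
        congr 1
        abel
      show phiF Cp Cm (η y) * g (shiftCfg x η)
        = phiF Cp Cm (shiftCfg x η (y + x)) * g (shiftCfg x η)
      rw [h2]
    have hsub1 : insert (y + x) S ⊆ shiftB (box d n) x := by
      refine Finset.insert_subset (mem_shiftB.2 ?_) (fun s hs => mem_shiftB.2 (himB x hx s hs))
      rwa [add_sub_cancel_right]
    have hsub2 : insert (y + x) S ⊆ box d n := Finset.insert_subset hyxB hSB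
    rw [h1, ← Eexp_shift (CC/CA) ρ (box d n) x (fun ζ => phiF Cp Cm (ζ (y + x)) * g ζ),
      Eexp_cylinder_congr (CC/CA) ρ hcylu hsub1 hsub2, hW]
  -- the key cancellation of the current against gradients (gradient condition)
  have wkey : ∀ η : Config d,
      rate Cp Cm CE CA CC e (0 : Site d) η * (((spin η (0 : Site d) : ℤ) : ℝ) - ((spin (cfgFlip e (0 : Site d) η) (0 : Site d) : ℤ) : ℝ))
        - rate Cp Cm CE CA CC (0 : Site d) e η * (((spin (cfgFlip (0 : Site d) e η) (0 : Site d) : ℤ) : ℝ) - ((spin η (0 : Site d) : ℤ) : ℝ))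
      = phiF Cp Cm (η 0) - phiF Cp Cm (η e) := by
    intro η
    rcases fin3_cases (η 0) with h0|h0|h0 <;> rcases fin3_cases (η e) with he'|he'|he' <;>
      simp [rate, cfgFlip, spin, phiF, hne, hne.symm, h0, he'] <;> (try norm_num) <;>
      (try linarith)
  -- the per-translate term
  have hTx : ∀ x ∈ X,
      Eexp (CC/CA) ρ (box d n) (fun η => rate Cp Cm CE CA CC (0 : Site d) e η * (((spin (cfgFlip (0 : Site d) e η) (0 : Site d) : ℤ) : ℝ) - ((spin η (0 : Site d) : ℤ) : ℝ)) * (g (shiftCfg x (cfgFlip (0 : Site d) e η)) - g (shiftCfg x η)))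
        = W x - W (e + x) := by
    intro x hx
    have ha : Eexp (CC/CA) ρ (box d n) (fun η => rate Cp Cm CE CA CC (0 : Site d) e η * (((spin (cfgFlip (0 : Site d) e η) (0 : Site d) : ℤ) : ℝ) - ((spin η (0 : Site d) : ℤ) : ℝ)) * (g (shiftCfg x (cfgFlip (0 : Site d) e η)) - g (shiftCfg x η)))
        = Eexp (CC/CA) ρ (box d n) (fun η => rate Cp Cm CE CA CC (0 : Site d) e η *
            ((fun ζ => (((spin ζ (0 : Site d) : ℤ) : ℝ)
              - ((spin (cfgFlip e (0 : Site d) ζ) (0 : Site d) : ℤ) : ℝ)) * g (shiftCfg x ζ))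
             (cfgFlip (0 : Site d) e η)))
          - Eexp (CC/CA) ρ (box d n) (fun η => rate Cp Cm CE CA CC (0 : Site d) e η * (((spin (cfgFlip (0 : Site d) e η) (0 : Site d) : ℤ) : ℝ) - ((spin η (0 : Site d) : ℤ) : ℝ)) * g (shiftCfg x η)) := by
      rw [← Eexp_sub]
      apply Eexp_congr
      intro η
      show rate Cp Cm CE CA CC (0 : Site d) e η * (((spin (cfgFlip (0 : Site d) e η) (0 : Site d) : ℤ) : ℝ) - ((spin η (0 : Site d) : ℤ) : ℝ)) * (g (shiftCfg x (cfgFlip (0 : Site d) e η)) - g (shiftCfg x η))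
        = rate Cp Cm CE CA CC (0 : Site d) e η * ((((spin (cfgFlip (0 : Site d) e η) (0 : Site d) : ℤ) : ℝ)
            - ((spin (cfgFlip e (0 : Site d) (cfgFlip (0 : Site d) e η)) (0 : Site d) : ℤ) : ℝ))
            * g (shiftCfg x (cfgFlip (0 : Site d) e η)))
          - rate Cp Cm CE CA CC (0 : Site d) e η * (((spin (cfgFlip (0 : Site d) e η) (0 : Site d) : ℤ) : ℝ) - ((spin η (0 : Site d) : ℤ) : ℝ)) * g (shiftCfg x η)
      rw [cfgFlip_flip hne η]
      ring
    have hb := Eexp_flip (CC/CA) ρ Cp Cm CE CA CC hne h0B heB hw hdb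
      (fun ζ => (((spin ζ (0 : Site d) : ℤ) : ℝ)
        - ((spin (cfgFlip e (0 : Site d) ζ) (0 : Site d) : ℤ) : ℝ)) * g (shiftCfg x ζ))
    rw [ha, hb, ← Eexp_sub]
    have hcc : Eexp (CC/CA) ρ (box d n) (fun η =>
        rate Cp Cm CE CA CC e (0 : Site d) η * ((((spin η (0 : Site d) : ℤ) : ℝ)
          - ((spin (cfgFlip e (0 : Site d) η) (0 : Site d) : ℤ) : ℝ)) * g (shiftCfg x η))
          - rate Cp Cm CE CA CC (0 : Site d) e η * (((spin (cfgFlip (0 : Site d) e η) (0 : Site d) : ℤ) : ℝ) - ((spin η (0 : Site d) : ℤ) : ℝ)) * g (shiftCfg x η))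
        = Eexp (CC/CA) ρ (box d n) (fun η => phiF Cp Cm (η 0) * g (shiftCfg x η))
          - Eexp (CC/CA) ρ (box d n) (fun η => phiF Cp Cm (η e) * g (shiftCfg x η)) := by
      rw [← Eexp_sub]
      apply Eexp_congr
      intro η
      linear_combination g (shiftCfg x η) * wkey η
    rw [hcc, htrans x hx 0 h0B (by rw [zero_add]; exact hYB (Finset.mem_union_left _ hx)),
      htrans x hx e heB (hYB (Finset.mem_union_right _ (Finset.mem_image_of_mem _ hx))),
      zero_add]
  -- the telescoping sum vanishes
  have hconst : ∀ z ∈ Y, z ∉ S →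
      W z = (∑ v : Fin 3, wgt (CC/CA) ρ v * phiF Cp Cm v) * Eexp (CC/CA) ρ (box d n) g := by
    intro z hzY hzS
    rw [hW]
    exact Eexp_indep (CC/CA) ρ hg (phiF Cp Cm) hzS hSB (hYB hzY)
  have hsum0 : ∑ x ∈ X, (W x - W (e + x)) = 0 := by
    rw [Finset.sum_sub_distrib]
    have hinj : Function.Injective (e + ·) := fun a b h => by
      simpa using add_left_cancel h
    have himg : ∑ x ∈ X, W (e + x) = ∑ z ∈ X', W z := by
      rw [hX']
      exact (Finset.sum_image (fun a _ b _ h => hinj h)).symm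
    rw [himg]
    have hXY : X ⊆ Y := Finset.subset_union_left
    have hX'Y : X' ⊆ Y := Finset.subset_union_right
    have e1 : ∑ x ∈ X, W x = ∑ z ∈ Y, W z - ∑ z ∈ Y \ X, W z := by
      rw [← Finset.sum_sdiff hXY]; ring
    have e2 : ∑ z ∈ X', W z = ∑ z ∈ Y, W z - ∑ z ∈ Y \ X', W z := by
      rw [← Finset.sum_sdiff hX'Y]; ring
    rw [e1, e2]
    have c1 : ∑ z ∈ Y \ X, W z = (Y \ X).card *
        ((∑ v : Fin 3, wgt (CC/CA) ρ v * phiF Cp Cm v) * Eexp (CC/CA) ρ (box d n) g) := by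
      rw [Finset.sum_congr rfl (fun z hz => hconst z (Finset.mem_sdiff.1 hz).1
        (fun hzS => (Finset.mem_sdiff.1 hz).2 (hSX hzS))), Finset.sum_const, nsmul_eq_mul]
    have c2 : ∑ z ∈ Y \ X', W z = (Y \ X').card *
        ((∑ v : Fin 3, wgt (CC/CA) ρ v * phiF Cp Cm v) * Eexp (CC/CA) ρ (box d n) g) := by
      rw [Finset.sum_congr rfl (fun z hz => hconst z (Finset.mem_sdiff.1 hz).1
        (fun hzS => (Finset.mem_sdiff.1 hz).2 (hSX' hzS))), Finset.sum_const, nsmul_eq_mul]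
    have hcard : (Y \ X).card = (Y \ X').card := by
      rw [Finset.card_sdiff_of_subset hXY, Finset.card_sdiff_of_subset hX'Y,
        Finset.card_image_of_injective _ hinj]
    rw [c1, c2, hcard]
    ring
  -- the cross term vanishes
  have key : Eexp (CC/CA) ρ (box d n)
      (fun η => rate Cp Cm CE CA CC (0 : Site d) e η * (((spin (cfgFlip (0 : Site d) e η) (0 : Site d) : ℤ) : ℝ) - ((spin η (0 : Site d) : ℤ) : ℝ)) * gradGammaSum i g η) = 0 := by
    have hBsum : Eexp (CC/CA) ρ (box d n)
        (fun η => rate Cp Cm CE CA CC (0 : Site d) e η * (((spin (cfgFlip (0 : Site d) e η) (0 : Site d) : ℤ) : ℝ) - ((spin η (0 : Site d) : ℤ) : ℝ)) * gradGammaSum i g η)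
        = ∑ x ∈ X, Eexp (CC/CA) ρ (box d n)
            (fun η => rate Cp Cm CE CA CC (0 : Site d) e η * (((spin (cfgFlip (0 : Site d) e η) (0 : Site d) : ℤ) : ℝ) - ((spin η (0 : Site d) : ℤ) : ℝ)) * (g (shiftCfg x (cfgFlip (0 : Site d) e η)) - g (shiftCfg x η))) := by
      rw [← Eexp_finsum]
      apply Eexp_congr
      intro η
      rw [hGa η, Finset.mul_sum]
    rw [hBsum, Finset.sum_congr rfl (fun x hx => hTx x hx)]
    exact hsum0
  -- positivity of the quadratic term
  have hQ : 0 ≤ Eexp (CC/CA) ρ (box d n) (fun η => rate Cp Cm CE CA CC (0 : Site d) e η * (gradGammaSum i g η) ^ 2) :=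
    Eexp_nonneg (CC/CA) ρ (box d n) (fun v => (hw v).le)
      (fun η => mul_nonneg (rate_nonneg hCp hCm hCE hCA hCC _ _ _) (sq_nonneg _))
  -- decomposition of the Dirichlet form
  have hdec : Eexp (CC/CA) ρ (box d n)
      (fun η => rate Cp Cm CE CA CC (0 : Site d) e η * (1 * (((spin (cfgFlip (0 : Site d) e η) (0 : Site d) : ℤ) : ℝ) - ((spin η (0 : Site d) : ℤ) : ℝ)) + gradGammaSum i g η) ^ 2)
      = Eexp (CC/CA) ρ (box d n)
          (fun η => rate Cp Cm CE CA CC (0 : Site d) e η * (1 * (((spin (cfgFlip (0 : Site d) e η) (0 : Site d) : ℤ) : ℝ) - ((spin η (0 : Site d) : ℤ) : ℝ)) + gradGammaSum i (fun _ => 0) η) ^ 2)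
        + (2 * Eexp (CC/CA) ρ (box d n) (fun η => rate Cp Cm CE CA CC (0 : Site d) e η * (((spin (cfgFlip (0 : Site d) e η) (0 : Site d) : ℤ) : ℝ) - ((spin η (0 : Site d) : ℤ) : ℝ)) * gradGammaSum i g η)
          + Eexp (CC/CA) ρ (box d n) (fun η => rate Cp Cm CE CA CC (0 : Site d) e η * (gradGammaSum i g η) ^ 2)) := by
    rw [← Eexp_const_mul, ← Eexp_add, ← Eexp_add]
    apply Eexp_congr
    intro η
    rw [hgz η]
    ring
  linarith [hdec, hQ, key]

end DGrad
/-- Remark after Theorem 3.17: under the gradient condition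
`C_+ + C_- - C_A - 2C_E = 0`, the diffusion coefficient is explicitly
`d(ρ) = -(Φ'(ρ)/2)(C_+ - C_-) + (C_+ + C_-)/2`. -/
theorem diffusion_coefficient_gradient_case
    (d : ℕ) (hd : 0 < d)
    (Cp Cm CE CA CC : ℝ)
    (hCp : 0 < Cp) (hCm : 0 < Cm) (hCE : 0 ≤ CE) (hCA : 0 < CA) (hCC : 0 < CC)
    (hgrad : Cp + Cm - CA - 2 * CE = 0) :
    ∀ ρ ∈ Set.Ioo (-1 : ℝ) 1,
      dCoef d hd Cp Cm CE CA CC ρ =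
        -(deriv (Phi (CC / CA)) ρ / 2) * (Cp - Cm) + (Cp + Cm) / 2 := by
  rintro ρ ⟨h1, h2⟩
  have hβ : 0 < CC / CA := div_pos hCC hCA
  have hPpos := DGrad.Phi_pos hβ h1 h2
  have habs := abs_lt.1 (DGrad.one_sub_Phi_gt hβ h1 h2)
  have hw : ∀ v : Fin 3, 0 < wgt (CC / CA) ρ v := by
    intro v
    rcases DGrad.fin3_cases v with hv|hv|hv <;> rw [hv]
    · show 0 < (1 - Phi (CC / CA) ρ - ρ) / 2
      linarith [habs.2]
    · show 0 < Phi (CC / CA) ρ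
      exact hPpos
    · show 0 < (1 - Phi (CC / CA) ρ + ρ) / 2
      linarith [habs.1]
  have hq := DGrad.quad hβ h1 h2
  have hsq := DGrad.sq_eq hβ h1 h2
  have hCA0 : CA ≠ 0 := ne_of_gt hCA
  have hcc : CA * (CC / CA) = CC := by field_simp
  have hdb : CA * (wgt (CC / CA) ρ 2 * wgt (CC / CA) ρ 0)
      = CC * (wgt (CC / CA) ρ 1 * wgt (CC / CA) ρ 1) := by
    show CA * ((1 - Phi (CC / CA) ρ + ρ) / 2 * ((1 - Phi (CC / CA) ρ - ρ) / 2))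
      = CC * (Phi (CC / CA) ρ * Phi (CC / CA) ρ)
    linear_combination (CA / 4) * hq + ((Phi (CC / CA) ρ) ^ 2) * hcc
  set D0 := dirichletForm Cp Cm CE CA CC ρ (⟨0, hd⟩ : Fin d) 1 (fun _ => 0) with hD0def
  have hmem : D0 ∈ {v : ℝ | ∃ g : Config d → ℝ, IsCylinder g ∧
      v = dirichletForm Cp Cm CE CA CC ρ (⟨0, hd⟩ : Fin d) 1 g} :=
    ⟨fun _ => 0, ⟨∅, fun _ _ _ => rfl⟩, hD0def⟩
  have hlb : ∀ v ∈ {v : ℝ | ∃ g : Config d → ℝ, IsCylinder g ∧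
      v = dirichletForm Cp Cm CE CA CC ρ (⟨0, hd⟩ : Fin d) 1 g}, D0 ≤ v := by
    rintro v ⟨g, hgc, rfl⟩
    exact DGrad.dirichletForm_ge hd hw hdb (le_of_lt hCp) (le_of_lt hCm) hCE
      (le_of_lt hCA) (le_of_lt hCC) hgrad g hgc
  have hsinf : sInf {v : ℝ | ∃ g : Config d → ℝ, IsCylinder g ∧
      v = dirichletForm Cp Cm CE CA CC ρ (⟨0, hd⟩ : Fin d) 1 g} = D0 :=
    le_antisymm (csInf_le ⟨D0, hlb⟩ hmem) (le_csInf ⟨D0, hmem⟩ hlb)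
  unfold dCoef
  rw [hsinf, hD0def, DGrad.dirichletForm_zero hd Cp Cm CE CA CC ρ,
    DGrad.deriv_Phi hβ h1 h2, DGrad.compress_eq hβ h1 h2]
  have hs0 : DGrad.sq (CC / CA) ρ ≠ 0 := ne_of_gt (DGrad.sq_pos hβ h1 h2)
  have hw0 : wgt (CC / CA) ρ 0 = (1 - Phi (CC / CA) ρ - ρ) / 2 := rfl
  have hw1 : wgt (CC / CA) ρ 1 = Phi (CC / CA) ρ := rfl
  have hw2 : wgt (CC / CA) ρ 2 = (1 - Phi (CC / CA) ρ + ρ) / 2 := rfl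
  rw [hw0, hw1, hw2]
  have hkey2 : Cp * ((1 - Phi (CC / CA) ρ + ρ) / 2 * Phi (CC / CA) ρ)
      + Cm * (Phi (CC / CA) ρ * ((1 - Phi (CC / CA) ρ - ρ) / 2))
      + 4 * CE * ((1 - Phi (CC / CA) ρ - ρ) / 2 * ((1 - Phi (CC / CA) ρ + ρ) / 2))
      + CA * ((1 - Phi (CC / CA) ρ + ρ) / 2 * ((1 - Phi (CC / CA) ρ - ρ) / 2))
      + CC * (Phi (CC / CA) ρ * Phi (CC / CA) ρ)
      = Phi (CC / CA) ρ * ρ * (Cp - Cm) / 2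
        + Phi (CC / CA) ρ * DGrad.sq (CC / CA) ρ * (Cp + Cm) / 2 := by
    linear_combination ((4 * CE + CA) / 4) * hq
      + (-(Cp + Cm) * Phi (CC / CA) ρ / 2) * hsq
      + (-2 * (CC / CA) * (Phi (CC / CA) ρ) ^ 2) * hgrad
      + (-(Phi (CC / CA) ρ) ^ 2) * hcc
  rw [hkey2]
  have hP0 : Phi (CC / CA) ρ ≠ 0 := ne_of_gt hPpos
  field_simp
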